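/- For all n ≥ 1, the first x-derivative of the bivariate degenerate Hermite polynomial satisfies ∂_x H_n(x,y|λ) = n · (log(1+λ)/λ) · H_{n-1}(x,y|λ). -/

import Mathlib

open Real Finset MeasureTheory

noncomputable def dH (l x y : ℝ) (n : ℕ) : ℝ :=
  ∑ k ∈ Finset.range (n / 2 + 1),
    (Nat.factorial n : ℝ) / ((Nat.factorial (n - 2 * k) : ℝ) * (Nat.factorial k : ℝ)) *
      (Real.log (1 + l) / l) ^ (n - k) * x ^ (n - 2 * k) * y ^ k

lemma deriv_term (a b : ℝ) (m : ℕ) (x : ℝ) :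
    deriv (fun x' : ℝ => a * x' ^ m * b) x = a * ((m : ℝ) * x ^ (m - 1)) * b := by
  have h : (fun x' : ℝ => a * x' ^ m * b) = fun x' : ℝ => (a * b) * x' ^ m := by
    funext t; ring
  rw [h, deriv_const_mul _ (differentiableAt_pow m), deriv_pow_field]
  ring

theorem stmt2 (l : ℝ) (hl : 0 < l) (n : ℕ) (hn : 1 ≤ n) (x y : ℝ) :
    deriv (fun x' => dH l x' y n) x =
      (n : ℝ) * (Real.log (1 + l) / l) * dH l x y (n - 1) := by
  obtain ⟨m, rfl⟩ : ∃ m, n = m + 1 := ⟨n - 1, (Nat.succ_pred_eq_of_pos hn).symm⟩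
  set L := Real.log (1 + l) / l with hL
  have hderiv : deriv (fun x' => dH l x' y (m + 1)) x
      = ∑ k ∈ Finset.range ((m + 1) / 2 + 1),
          (Nat.factorial (m + 1) : ℝ) /
              ((Nat.factorial (m + 1 - 2 * k) : ℝ) * (Nat.factorial k : ℝ)) *
            L ^ (m + 1 - k) * (((m + 1 - 2 * k : ℕ) : ℝ) * x ^ (m + 1 - 2 * k - 1)) * y ^ k := by
    unfold dH
    rw [deriv_fun_sum (fun k _ => by
      have : (fun x' : ℝ => (Nat.factorial (m + 1) : ℝ) /
          ((Nat.factorial (m + 1 - 2 * k) : ℝ) * (Nat.factorial k : ℝ)) *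
            L ^ (m + 1 - k) * x' ^ (m + 1 - 2 * k) * y ^ k)
          = fun x' : ℝ => ((Nat.factorial (m + 1) : ℝ) /
          ((Nat.factorial (m + 1 - 2 * k) : ℝ) * (Nat.factorial k : ℝ)) *
            L ^ (m + 1 - k) * y ^ k) * x' ^ (m + 1 - 2 * k) := by funext t; ring
      rw [this]
      exact (differentiableAt_pow _).const_mul _)]
    exact Finset.sum_congr rfl fun k _ => deriv_term _ _ _ _
  have key : ∀ k : ℕ, 2 * k ≤ m →
      (Nat.factorial (m + 1) : ℝ) /
          ((Nat.factorial (m + 1 - 2 * k) : ℝ) * (Nat.factorial k : ℝ)) *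
        L ^ (m + 1 - k) * (((m + 1 - 2 * k : ℕ) : ℝ) * x ^ (m + 1 - 2 * k - 1)) * y ^ k
      = ((m + 1 : ℕ) : ℝ) * L *
        ((Nat.factorial m : ℝ) / ((Nat.factorial (m - 2 * k) : ℝ) * (Nat.factorial k : ℝ)) *
          L ^ (m - k) * x ^ (m - 2 * k) * y ^ k) := by
    intro k hk
    have h1 : m + 1 - 2 * k = m - 2 * k + 1 := by omega
    have h2 : m + 1 - k = m - k + 1 := by omega
    have h3 : m + 1 - 2 * k - 1 = m - 2 * k := by omega
    have hfac : (Nat.factorial (m + 1) : ℝ) = ((m + 1 : ℕ) : ℝ) * (Nat.factorial m : ℝ) := by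
      rw [Nat.factorial_succ, Nat.cast_mul]
    rw [h1, h2, Nat.add_sub_cancel, Nat.factorial_succ (m - 2 * k), pow_succ, hfac, Nat.cast_mul]
    have hf1 : ((Nat.factorial (m - 2 * k) : ℝ)) ≠ 0 := Nat.cast_ne_zero.mpr (Nat.factorial_ne_zero _)
    have hf2 : ((Nat.factorial k : ℝ)) ≠ 0 := Nat.cast_ne_zero.mpr (Nat.factorial_ne_zero _)
    rw [show ((m - 2 * k + 1 : ℕ) : ℝ) = ((m - 2 * k : ℕ) : ℝ) + 1 by push_cast; ring]
    have hf3 : ((m - 2 * k : ℕ) : ℝ) + 1 ≠ 0 := by positivity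
    generalize ((m - 2 * k : ℕ) : ℝ) = c at hf3 ⊢
    field_simp
  rcases Nat.even_or_odd m with ⟨t, ht⟩ | ⟨t, ht⟩
  · subst ht
    have hr1 : (t + t + 1) / 2 + 1 = t + 1 := by omega
    have hr2 : (t + t + 1 - 1) / 2 + 1 = t + 1 := by omega
    rw [hderiv, dH, hr1, hr2, Finset.mul_sum]
    refine Finset.sum_congr rfl fun k hk => ?_
    have hk' : 2 * k ≤ t + t := by
      have := Finset.mem_range.mp hk; omega
    simpa using key k hk'
  · subst ht
    have hr1 : (2 * t + 1 + 1) / 2 + 1 = (t + 1) + 1 := by omega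
    have hr2 : (2 * t + 1 + 1 - 1) / 2 + 1 = t + 1 := by omega
    rw [hderiv, dH, hr1, hr2, Finset.sum_range_succ, Finset.mul_sum]
    have hzero : 2 * t + 1 + 1 - 2 * (t + 1) = 0 := by omega
    rw [hzero]
    simp only [Nat.cast_zero, zero_mul, mul_zero, zero_mul, add_zero]
    refine Finset.sum_congr rfl fun k hk => ?_
    have hk' : 2 * k ≤ 2 * t + 1 := by
      have := Finset.mem_range.mp hk; omega
    simpa using key k hk'
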